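/- Lattice approximation existence: Let A be an m×n matrix with entries aᵢⱼ ∈ [0,1] and let p ∈ [0,1]ⁿ, with m ≥ 2. Then there exists q ∈ {0,1}ⁿ such that for every i ∈ [m], |Σ_{j=1}ⁿ aᵢⱼqⱼ − Σ_{j=1}ⁿ aᵢⱼpⱼ| ≤ C·(√(μᵢ·log m) + log m), where μᵢ = Σ_{j=1}ⁿ aᵢⱼpⱼ and C > 0 is an absolute constant. -/

import Mathlib

open Finset Real


private lemma exp_sub_one_sub_le {t : ℝ} (ht : |t| ≤ 1) : Real.exp t - 1 - t ≤ t ^ 2 := by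
  have h := Real.exp_bound ht (n := 2) (by norm_num)
  have h2 : ∑ m ∈ Finset.range 2, t ^ m / m.factorial = 1 + t := by
    simp [Finset.sum_range_succ]
  rw [h2] at h
  have h3 : Real.exp t - (1 + t) ≤ |t| ^ 2 * (3 / (2 * 2)) := by
    calc Real.exp t - (1 + t) ≤ |Real.exp t - (1 + t)| := le_abs_self _
      _ ≤ |t| ^ 2 * ((2 : ℕ).succ / ((2:ℕ).factorial * 2)) := h
      _ = |t| ^ 2 * (3 / (2 * 2)) := by norm_num [Nat.factorial]
  have : |t| ^ 2 = t ^ 2 := sq_abs t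
  nlinarith [sq_nonneg t]

private lemma exp_factor_le {a p t : ℝ} (ha : 0 ≤ a) (ha1 : a ≤ 1) (hp : 0 ≤ p)
    (hp1 : p ≤ 1) (ht : |t| ≤ 1) :
    (1 - p) * Real.exp (t * (a * ((0:ℝ) - p))) + p * Real.exp (t * (a * (1 - p)))
      ≤ Real.exp (a * p * t ^ 2) := by
  have hconv : Real.exp (t * a) ≤ 1 + a * (Real.exp t - 1) := by
    have h := convexOn_exp.2 (Set.mem_univ t) (Set.mem_univ (0:ℝ)) ha
      (by linarith : (0:ℝ) ≤ 1 - a) (by ring)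
    simp only [smul_eq_mul, mul_zero, add_zero, Real.exp_zero, mul_one] at h
    have : t * a = a * t := mul_comm t a
    rw [this]; linarith
  have key : (1 - p) + p * Real.exp (t * a) ≤ Real.exp (a * p * (Real.exp t - 1)) := by
    have h1 : (1 - p) + p * Real.exp (t * a) ≤ 1 + a * p * (Real.exp t - 1) := by
      nlinarith [hconv, hp]
    calc (1 - p) + p * Real.exp (t * a) ≤ 1 + a * p * (Real.exp t - 1) := h1
      _ ≤ Real.exp (a * p * (Real.exp t - 1)) := by
          have := Real.add_one_le_exp (a * p * (Real.exp t - 1)); linarith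
  have hfact : (1 - p) * Real.exp (t * (a * ((0:ℝ) - p))) + p * Real.exp (t * (a * (1 - p)))
      = Real.exp (-(t * a * p)) * ((1 - p) + p * Real.exp (t * a)) := by
    rw [mul_add, mul_comm (Real.exp (-(t*a*p))) (1-p), mul_comm (Real.exp (-(t*a*p)))
      (p * Real.exp (t*a)), mul_assoc p, ← Real.exp_add]
    congr 2
    · congr 1; ring
    · congr 1; ring
  rw [hfact]
  calc Real.exp (-(t * a * p)) * ((1 - p) + p * Real.exp (t * a))
      ≤ Real.exp (-(t * a * p)) * Real.exp (a * p * (Real.exp t - 1)) := by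
        apply mul_le_mul_of_nonneg_left key (Real.exp_nonneg _)
    _ = Real.exp (a * p * (Real.exp t - 1 - t)) := by rw [← Real.exp_add]; ring_nf
    _ ≤ Real.exp (a * p * t ^ 2) := by
        apply Real.exp_le_exp.2
        have h := exp_sub_one_sub_le ht
        nlinarith [mul_nonneg ha hp]


private noncomputable def wgt {n : ℕ} (p : Fin n → ℝ) (q : Fin n → Bool) : ℝ :=
  ∏ j, if q j then p j else 1 - p j

private lemma wgt_nonneg {n : ℕ} (p : Fin n → ℝ) (hp : ∀ j, 0 ≤ p j ∧ p j ≤ 1)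
    (q : Fin n → Bool) : 0 ≤ wgt p q := by
  apply Finset.prod_nonneg
  intro j _
  by_cases h : q j
  · simp [h, (hp j).1]
  · simp only [h, if_false, Bool.false_eq_true]; linarith [(hp j).2]

private lemma wgt_sum_one {n : ℕ} (p : Fin n → ℝ) :
    ∑ q : Fin n → Bool, wgt p q = 1 := by
  have h := (Fintype.prod_sum (fun (j : Fin n) (b : Bool) => if b then p j else 1 - p j)).symm
  unfold wgt
  rw [h]
  have : ∀ j : Fin n, ∑ b : Bool, (if b then p j else 1 - p j) = 1 := by
    intro j; rw [Fintype.sum_bool]; simp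
  simp [this]

private lemma mgf_bound {n : ℕ} (a p : Fin n → ℝ)
    (ha : ∀ j, 0 ≤ a j ∧ a j ≤ 1) (hp : ∀ j, 0 ≤ p j ∧ p j ≤ 1)
    {t : ℝ} (ht : |t| ≤ 1) :
    ∑ q : Fin n → Bool, wgt p q *
        Real.exp (t * ∑ j, a j * ((if q j then (1:ℝ) else 0) - p j))
      ≤ Real.exp ((∑ j, a j * p j) * t ^ 2) := by
  have factpt : ∀ q : Fin n → Bool,
      wgt p q * Real.exp (t * ∑ j, a j * ((if q j then (1:ℝ) else 0) - p j))
      = ∏ j, ((if q j then p j else 1 - p j) *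
          Real.exp (t * (a j * ((if q j then (1:ℝ) else 0) - p j)))) := by
    intro q
    rw [Finset.prod_mul_distrib, Finset.mul_sum, Real.exp_sum]
    unfold wgt
    congr 1
  simp only [factpt]
  rw [← Fintype.prod_sum (fun (j : Fin n) (b : Bool) => (if b then p j else 1 - p j) * Real.exp (t * (a j * ((if b then (1:ℝ) else 0) - p j))))]
  have hfac : ∀ j : Fin n,
      (∑ b : Bool, ((if b then p j else 1 - p j) *
          Real.exp (t * (a j * ((if b then (1:ℝ) else 0) - p j)))))
      ≤ Real.exp (a j * p j * t ^ 2) := by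
    intro j
    have h := exp_factor_le (ha j).1 (ha j).2 (hp j).1 (hp j).2 ht
    rw [Fintype.sum_bool]
    simp only [if_true, if_false, Bool.false_eq_true]
    linarith
  calc (∏ j, ∑ b : Bool, ((if b then p j else 1 - p j) *
          Real.exp (t * (a j * ((if b then (1:ℝ) else 0) - p j)))))
      ≤ ∏ j, Real.exp (a j * p j * t ^ 2) := by
        apply Finset.prod_le_prod
        · intro j _
          rw [Fintype.sum_bool]
          have e1 : (0:ℝ) ≤ p j * Real.exp (t * (a j * ((1:ℝ) - p j))) :=
            mul_nonneg (hp j).1 (Real.exp_nonneg _)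
          have e2 : (0:ℝ) ≤ (1 - p j) * Real.exp (t * (a j * ((0:ℝ) - p j))) :=
            mul_nonneg (by linarith [(hp j).2]) (Real.exp_nonneg _)
          simp only [if_true, if_false, Bool.false_eq_true] at e1 e2 ⊢
          linarith
        · intro j _; exact hfac j
    _ = Real.exp (∑ j, a j * p j * t ^ 2) := (Real.exp_sum _ _).symm
    _ = Real.exp ((∑ j, a j * p j) * t ^ 2) := by rw [← Finset.sum_mul]


private lemma markov_tail {n : ℕ} (w f : (Fin n → Bool) → ℝ) (hw : ∀ q, 0 ≤ w q)
    {t lam : ℝ} (ht : 0 < t) :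
    ∑ q ∈ Finset.univ.filter (fun q => lam < f q), w q
      ≤ Real.exp (-(t * lam)) * ∑ q : Fin n → Bool, w q * Real.exp (t * f q) := by
  have h1 : ∑ q ∈ Finset.univ.filter (fun q => lam < f q), w q
      ≤ ∑ q ∈ Finset.univ.filter (fun q => lam < f q),
          w q * Real.exp (t * f q - t * lam) := by
    apply Finset.sum_le_sum
    intro q hq
    simp only [Finset.mem_filter] at hq
    have : (1:ℝ) ≤ Real.exp (t * f q - t * lam) := by
      rw [← Real.exp_zero]
      apply Real.exp_le_exp.2
      nlinarith [hq.2]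
    nlinarith [hw q]
  have h2 : ∑ q ∈ Finset.univ.filter (fun q => lam < f q),
        w q * Real.exp (t * f q - t * lam)
      ≤ ∑ q : Fin n → Bool, w q * Real.exp (t * f q - t * lam) := by
    apply Finset.sum_le_sum_of_subset_of_nonneg (Finset.filter_subset _ _)
    intro q _ _
    exact mul_nonneg (hw q) (Real.exp_nonneg _)
  have h3 : ∑ q : Fin n → Bool, w q * Real.exp (t * f q - t * lam)
      = Real.exp (-(t * lam)) * ∑ q : Fin n → Bool, w q * Real.exp (t * f q) := by
    rw [Finset.mul_sum]
    apply Finset.sum_congr rfl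
    intro q _
    rw [show t * f q - t * lam = t * f q + -(t*lam) by ring, Real.exp_add]
    ring
  linarith


private lemma choose_t {mu L : ℝ} (hmu : 0 ≤ mu) (hL : 0 < L) :
    ∃ t : ℝ, 0 < t ∧ t ≤ 1 ∧
      mu * t ^ 2 - t * (2 * Real.sqrt (mu * L) + 2 * L) ≤ -L := by
  rcases le_or_gt mu L with h | h
  · refine ⟨1, one_pos, le_refl 1, ?_⟩
    have hs : 0 ≤ Real.sqrt (mu * L) := Real.sqrt_nonneg _
    nlinarith
  · have hmu0 : 0 < mu := lt_trans hL h
    refine ⟨Real.sqrt (L / mu), Real.sqrt_pos.2 (div_pos hL hmu0), ?_, ?_⟩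
    · rw [show (1:ℝ) = Real.sqrt 1 by simp]
      apply Real.sqrt_le_sqrt
      rw [div_le_one hmu0]
      linarith
    · have ht2 : Real.sqrt (L / mu) ^ 2 = L / mu := Real.sq_sqrt (le_of_lt (div_pos hL hmu0))
      have h1 : mu * Real.sqrt (L / mu) ^ 2 = L := by
        rw [ht2]; field_simp
      have h2 : Real.sqrt (L / mu) * Real.sqrt (mu * L) = L := by
        rw [← Real.sqrt_mul (le_of_lt (div_pos hL hmu0))]
        rw [show L / mu * (mu * L) = L ^ 2 by field_simp]
        exact Real.sqrt_sq (le_of_lt hL)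
      have h3 : 0 ≤ Real.sqrt (L / mu) * (2 * L) :=
        mul_nonneg (Real.sqrt_nonneg _) (by linarith)
      nlinarith




/-- Lattice approximation existence (randomized rounding for linear programs). -/
theorem lattice_approximation_exists :
    ∃ C : ℝ, 0 < C ∧
      ∀ (m n : ℕ), 2 ≤ m →
        ∀ (A : Fin m → Fin n → ℝ) (p : Fin n → ℝ),
          (∀ i j, 0 ≤ A i j ∧ A i j ≤ 1) →
          (∀ j, 0 ≤ p j ∧ p j ≤ 1) →
          ∃ q : Fin n → ℝ, (∀ j, q j = 0 ∨ q j = 1) ∧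
            ∀ i : Fin m,
              |∑ j, A i j * q j - ∑ j, A i j * p j|
                ≤ C * (Real.sqrt ((∑ j, A i j * p j) * Real.log m) + Real.log m) := by
  refine ⟨6, by norm_num, ?_⟩
  intro m n hm A p hA hp
  set M : ℝ := (m : ℝ) with hMdef
  have hM2 : (2:ℝ) ≤ M := by rw [hMdef]; exact_mod_cast hm
  have hl : 0 < Real.log M := Real.log_pos (by linarith)
  set l : ℝ := Real.log M with hldef
  set L : ℝ := 3 * l with hLdef
  have hL : 0 < L := by positivity
  set S : Fin m → (Fin n → Bool) → ℝ :=
    fun i q => ∑ j, A i j * ((if q j then (1:ℝ) else 0) - p j) with hSdef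
  set mu : Fin m → ℝ := fun i => ∑ j, A i j * p j with hmudef
  have hmu : ∀ i, 0 ≤ mu i := by
    intro i
    apply Finset.sum_nonneg
    intro j _
    exact mul_nonneg (hA i j).1 (hp j).1
  set lam : Fin m → ℝ := fun i => 2 * Real.sqrt (mu i * L) + 2 * L with hlamdef
  -- tail bounds
  have tail : ∀ i : Fin m, ∀ s : ℝ, s = 1 ∨ s = -1 →
      ∑ q ∈ Finset.univ.filter (fun q => lam i < s * S i q), wgt p q ≤ Real.exp (-L) := by
    intro i s hs
    obtain ⟨t, ht0, ht1, hte⟩ := choose_t (hmu i) hL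
    have habs : |s * t| ≤ 1 := by
      rcases hs with h | h <;> rw [h] <;> simp [abs_of_pos ht0] <;> linarith
    have hmgf : ∑ q : Fin n → Bool, wgt p q * Real.exp (t * (s * S i q))
        ≤ Real.exp (mu i * t ^ 2) := by
      have h := mgf_bound (A i) p (hA i) hp habs
      have hrw : ∀ q : Fin n → Bool, t * (s * S i q) = (s * t) * S i q := by
        intro q; ring
      simp only [hrw]
      have hsq : (s * t) ^ 2 = t ^ 2 := by rcases hs with h' | h' <;> rw [h'] <;> ring
      rw [hSdef, hmudef]
      rw [hsq] at h
      exact h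
    have hmk := markov_tail (wgt p) (fun q => s * S i q) (wgt_nonneg p hp) ht0 (lam := lam i)
    calc ∑ q ∈ Finset.univ.filter (fun q => lam i < s * S i q), wgt p q
        ≤ Real.exp (-(t * lam i)) * ∑ q : Fin n → Bool, wgt p q * Real.exp (t * (s * S i q)) :=
          hmk
      _ ≤ Real.exp (-(t * lam i)) * Real.exp (mu i * t ^ 2) := by
          apply mul_le_mul_of_nonneg_left hmgf (Real.exp_nonneg _)
      _ = Real.exp (mu i * t ^ 2 - t * lam i) := by rw [← Real.exp_add]; ring_nf
      _ ≤ Real.exp (-L) := Real.exp_le_exp.2 hte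
  -- existence of good boolean vector
  have hgood : ∃ qb : Fin n → Bool, ∀ i, |S i qb| ≤ lam i := by
    by_contra hbad
    push_neg at hbad
    have hover : (1:ℝ) ≤ ∑ i : Fin m,
        ((∑ q ∈ Finset.univ.filter (fun q => lam i < 1 * S i q), wgt p q)
          + ∑ q ∈ Finset.univ.filter (fun q => lam i < (-1) * S i q), wgt p q) := by
      have hpt : ∀ qb : Fin n → Bool, wgt p qb ≤ ∑ i : Fin m,
          ((if lam i < 1 * S i qb then wgt p qb else 0)
            + (if lam i < (-1) * S i qb then wgt p qb else 0)) := by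
        intro qb
        obtain ⟨i₀, hi₀⟩ := hbad qb
        have hnn : ∀ i : Fin m, (0:ℝ) ≤
            ((if lam i < 1 * S i qb then wgt p qb else 0)
              + (if lam i < (-1) * S i qb then wgt p qb else 0)) := by
          intro i
          have := wgt_nonneg p hp qb
          positivity
        have hterm : wgt p qb ≤
            ((if lam i₀ < 1 * S i₀ qb then wgt p qb else 0)
              + (if lam i₀ < (-1) * S i₀ qb then wgt p qb else 0)) := by
          have hw0 := wgt_nonneg p hp qb
          rcases lt_abs.mp hi₀ with h | h
          · rw [if_pos (by rw [one_mul]; exact h)]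
            have h2 : (0:ℝ) ≤ (if lam i₀ < (-1) * S i₀ qb then wgt p qb else 0) := by
              split_ifs
              exacts [hw0, le_rfl]
            linarith
          · have hcond : lam i₀ < (-1) * S i₀ qb := by rw [neg_one_mul]; exact h
            rw [if_pos hcond]
            have h2 : (0:ℝ) ≤ (if lam i₀ < 1 * S i₀ qb then wgt p qb else 0) := by
              split_ifs
              exacts [hw0, le_rfl]
            linarith
        calc wgt p qb ≤ _ := hterm
          _ ≤ _ := Finset.single_le_sum (fun i _ => hnn i) (Finset.mem_univ i₀)
      calc (1:ℝ) = ∑ q : Fin n → Bool, wgt p q := (wgt_sum_one p).symm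
        _ ≤ ∑ q : Fin n → Bool, ∑ i : Fin m,
            ((if lam i < 1 * S i q then wgt p q else 0)
              + (if lam i < (-1) * S i q then wgt p q else 0)) :=
            Finset.sum_le_sum (fun q _ => hpt q)
        _ = ∑ i : Fin m, ∑ q : Fin n → Bool,
            ((if lam i < 1 * S i q then wgt p q else 0)
              + (if lam i < (-1) * S i q then wgt p q else 0)) := Finset.sum_comm
        _ = ∑ i : Fin m,
            ((∑ q ∈ Finset.univ.filter (fun q => lam i < 1 * S i q), wgt p q)
              + ∑ q ∈ Finset.univ.filter (fun q => lam i < (-1) * S i q), wgt p q) := by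
            apply Finset.sum_congr rfl
            intro i _
            rw [Finset.sum_add_distrib, Finset.sum_filter, Finset.sum_filter]
    have hbound : ∑ i : Fin m,
        ((∑ q ∈ Finset.univ.filter (fun q => lam i < 1 * S i q), wgt p q)
          + ∑ q ∈ Finset.univ.filter (fun q => lam i < (-1) * S i q), wgt p q)
        ≤ M * (2 * Real.exp (-L)) := by
      calc _ ≤ ∑ _i : Fin m, (2 * Real.exp (-L)) := by
            apply Finset.sum_le_sum
            intro i _
            have h1 := tail i 1 (Or.inl rfl)
            have h2 := tail i (-1) (Or.inr rfl)
            linarith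
        _ = M * (2 * Real.exp (-L)) := by
            rw [Finset.sum_const, Finset.card_univ, Fintype.card_fin, nsmul_eq_mul]
    have hexp : Real.exp (-L) = (M ^ 3)⁻¹ := by
      rw [hLdef, hldef, show (3:ℝ) * Real.log M = Real.log (M ^ 3) by
        rw [Real.log_pow]; norm_num, Real.exp_neg, Real.exp_log (by positivity)]
    rw [hexp] at hbound
    have hM3 : (0:ℝ) < M ^ 3 := by positivity
    have hMpos : (0:ℝ) < M := by linarith
    have heq : M * (2 * (M ^ 3)⁻¹) = 2 / M ^ 2 := by
      field_simp
    have : M * (2 * (M ^ 3)⁻¹) ≤ 1/2 := by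
      rw [heq, div_le_div_iff₀ (by positivity) (by norm_num)]
      nlinarith
    linarith
  obtain ⟨qb, hqb⟩ := hgood
  refine ⟨fun j => if qb j then (1:ℝ) else 0, fun j => by by_cases h : qb j <;> simp [h], ?_⟩
  intro i
  have hdiff : ∑ j, A i j * (if qb j then (1:ℝ) else 0) - ∑ j, A i j * p j = S i qb := by
    rw [hSdef, ← Finset.sum_sub_distrib]
    apply Finset.sum_congr rfl
    intro j _
    ring
  rw [hdiff]
  have hsqrt3 : Real.sqrt 3 ≤ 2 := by
    nlinarith [Real.sq_sqrt (by norm_num : (0:ℝ) ≤ 3), Real.sqrt_nonneg 3]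
  have hmul : Real.sqrt (mu i * L) = Real.sqrt 3 * Real.sqrt (mu i * l) := by
    rw [hLdef, ← Real.sqrt_mul (by norm_num : (0:ℝ) ≤ 3)]
    congr 1
    ring
  have hsn : 0 ≤ Real.sqrt (mu i * l) := Real.sqrt_nonneg _
  calc |S i qb| ≤ lam i := hqb i
    _ = 2 * (Real.sqrt 3 * Real.sqrt (mu i * l)) + 6 * l := by
        rw [hlamdef]; simp only []; rw [hmul, hLdef]; ring
    _ ≤ 6 * (Real.sqrt (mu i * l) + l) := by nlinarith
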